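/- If f : [0,1] → ℝ is of bounded variation, then for each Haar wavelet b_{kj}(t) = λ(2^k t − j), where λ(t) = 1 on [0,1/2), −1 on [1/2,1), and 0 otherwise, the inner product satisfies |⟨f, b_{kj}⟩| ≤ 2^{−k−1} ∫_{j 2^{−k}}^{(j+1) 2^{−k}} |f'(t)| dt, where f' denotes the weak derivative of f. -/

import Mathlib

open MeasureTheory Set

/-- The Haar mother wavelet: 1 on [0,1/2), -1 on [1/2,1), 0 otherwise. -/
noncomputable def haarMother : ℝ → ℝ :=
  fun t => if t ∈ Set.Ico (0:ℝ) (1/2) then 1 else if t ∈ Set.Ico (1/2:ℝ) 1 then -1 else 0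

/-- The Haar wavelet `b_{kj}(t) = λ(2^k t - j)`. -/
noncomputable def haar (k j : ℕ) (t : ℝ) : ℝ := haarMother (2 ^ k * t - j)

/-- If `f : [0,1] → ℝ` is of bounded variation with weak derivative `f'`, then
`|⟨f, b_{kj}⟩| ≤ 2^{-k-1} ∫_{j 2^{-k}}^{(j+1) 2^{-k}} |f'(t)| dt`. -/
theorem haar_inner_bound (f f' : ℝ → ℝ) (k j : ℕ) (hj : j < 2 ^ k)
    (hBV : BoundedVariationOn f (Set.Icc (0:ℝ) 1))
    (hf'int : IntervalIntegrable f' volume 0 1)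
    (hweak : ∀ t ∈ Set.Icc (0:ℝ) 1, f t = f 0 + ∫ s in (0:ℝ)..t, f' s) :
    |∫ t in (0:ℝ)..1, f t * haar k j t| ≤
      (2:ℝ) ^ (-(k:ℤ) - 1) *
        ∫ t in ((j:ℝ) * (2:ℝ) ^ (-(k:ℤ)))..(((j:ℝ) + 1) * (2:ℝ) ^ (-(k:ℤ))), |f' t| := by
  have h2k : (0:ℝ) < 2 ^ k := by positivity
  set c : ℝ := (2:ℝ) ^ (-(k:ℤ)) with hc_def
  have hc : c = ((2:ℝ) ^ k)⁻¹ := by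
    rw [hc_def, zpow_neg, zpow_natCast]
  have hc0 : (0:ℝ) < c := by rw [hc]; positivity
  set a : ℝ := (j:ℝ) * c with ha_def
  set b : ℝ := ((j:ℝ) + 1) * c with hb_def
  set m : ℝ := ((j:ℝ) + 1/2) * c with hm_def
  set h : ℝ := (2:ℝ) ^ (-(k:ℤ) - 1) with hh_def
  have hh : h = c / 2 := by
    rw [hh_def, hc_def, zpow_sub₀ (by norm_num : (2:ℝ) ≠ 0), zpow_one]
  have ham : a + h = m := by rw [hh, ha_def, hm_def]; ring
  have hmb : m + h = b := by rw [hh, hm_def, hb_def]; ring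
  have ha0 : 0 ≤ a := by positivity
  have ham' : a < m := by nlinarith
  have hmb' : m < b := by nlinarith
  have hb1 : b ≤ 1 := by
    have : ((j:ℝ) + 1) ≤ 2 ^ k := by
      have := hj
      exact_mod_cast Nat.succ_le_of_lt hj
    calc b = ((j:ℝ) + 1) * c := rfl
      _ ≤ (2:ℝ)^k * c := by nlinarith
      _ = 1 := by rw [hc]; field_simp
  have hcmul : c * 2 ^ k = 1 := by rw [hc]; field_simp
  -- characterization of the haar function
  have hhaar : ∀ t : ℝ, haar k j t =
      (Ico a m).indicator (fun _ => (1:ℝ)) t - (Ico m b).indicator (fun _ => (1:ℝ)) t := by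
    intro t
    have eA : (2:ℝ) ^ k * a = j := by rw [ha_def, hc]; field_simp
    have eM : (2:ℝ) ^ k * m = (j:ℝ) + 1/2 := by rw [hm_def, hc]; field_simp
    have eB : (2:ℝ) ^ k * b = (j:ℝ) + 1 := by rw [hb_def, hc]; field_simp
    have iff1 : a ≤ t ↔ (j:ℝ) ≤ 2 ^ k * t := by
      rw [← eA]; exact (mul_le_mul_iff_right₀ h2k).symm
    have iff2 : t < m ↔ 2 ^ k * t < (j:ℝ) + 1/2 := by
      rw [← eM]; exact (mul_lt_mul_iff_right₀ h2k).symm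
    have iff3 : m ≤ t ↔ (j:ℝ) + 1/2 ≤ 2 ^ k * t := by
      rw [← eM]; exact (mul_le_mul_iff_right₀ h2k).symm
    have iff4 : t < b ↔ 2 ^ k * t < (j:ℝ) + 1 := by
      rw [← eB]; exact (mul_lt_mul_iff_right₀ h2k).symm
    have e1 : ((2:ℝ) ^ k * t - j ∈ Ico (0:ℝ) (1/2)) ↔ t ∈ Ico a m := by
      simp only [mem_Ico, sub_nonneg, sub_lt_iff_lt_add]
      constructor
      · rintro ⟨u, v⟩
        exact ⟨iff1.mpr u, iff2.mpr (by linarith)⟩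
      · rintro ⟨u, v⟩
        exact ⟨iff1.mp u, by linarith [iff2.mp v]⟩
    have e2 : ((2:ℝ) ^ k * t - j ∈ Ico (1/2:ℝ) 1) ↔ t ∈ Ico m b := by
      simp only [mem_Ico, le_sub_iff_add_le, sub_lt_iff_lt_add]
      constructor
      · rintro ⟨u, v⟩
        exact ⟨iff3.mpr (by linarith), iff4.mpr (by linarith)⟩
      · rintro ⟨u, v⟩
        exact ⟨by linarith [iff3.mp u], by linarith [iff4.mp v]⟩
    simp only [haar, haarMother]
    by_cases h1 : (2:ℝ) ^ k * t - j ∈ Ico (0:ℝ) (1/2)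
    · have ht1 : t ∈ Ico a m := e1.mp h1
      have ht2 : t ∉ Ico m b := by
        intro ht2
        exact absurd ht1.2 (not_lt.mpr ht2.1)
      rw [if_pos h1, indicator_of_mem ht1, indicator_of_notMem ht2]
      norm_num
    · by_cases h2 : (2:ℝ) ^ k * t - j ∈ Ico (1/2:ℝ) 1
      · have ht2 : t ∈ Ico m b := e2.mp h2
        have ht1 : t ∉ Ico a m := by
          intro ht1
          exact absurd ht2.1 (not_le.mpr ht1.2)
        rw [if_neg h1, if_pos h2, indicator_of_mem ht2, indicator_of_notMem ht1]
        norm_num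
      · have ht1 : t ∉ Ico a m := fun ht => h1 (e1.mpr ht)
        have ht2 : t ∉ Ico m b := fun ht => h2 (e2.mpr ht)
        rw [if_neg h1, if_neg h2, indicator_of_notMem ht1, indicator_of_notMem ht2]
        norm_num
  -- f is continuous on [0,1]
  set F : ℝ → ℝ := fun t => ∫ s in (0:ℝ)..t, f' s with hF_def
  have hFcont : ContinuousOn F (Set.uIcc (0:ℝ) 1) :=
    intervalIntegral.continuousOn_primitive_interval' hf'int left_mem_uIcc
  have huIcc01 : Set.uIcc (0:ℝ) 1 = Icc (0:ℝ) 1 := by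
    rw [uIcc_of_le]; norm_num
  have hfcont : ContinuousOn f (Icc (0:ℝ) 1) := by
    apply ContinuousOn.congr (continuousOn_const.add (huIcc01 ▸ hFcont))
    intro t ht
    exact hweak t ht
  have hfint : IntervalIntegrable f volume 0 1 := by
    apply ContinuousOn.intervalIntegrable
    rwa [huIcc01]
  -- first step: compute the inner product as difference of two integrals
  have hsub1 : Icc a m ⊆ Icc (0:ℝ) 1 := Icc_subset_Icc ha0 (by linarith)
  have hsub2 : Icc m b ⊆ Icc (0:ℝ) 1 := Icc_subset_Icc (by linarith) hb1
  have hfint1 : IntervalIntegrable f volume a m :=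
    (hfcont.mono hsub1).intervalIntegrable_of_Icc ham'.le
  have hfint2 : IntervalIntegrable f volume m b :=
    (hfcont.mono hsub2).intervalIntegrable_of_Icc hmb'.le
  have step1 : ∫ t in (0:ℝ)..1, f t * haar k j t =
      (∫ t in a..m, f t) - ∫ t in m..b, f t := by
    have e0 : ∀ t, f t * haar k j t =
        (Ico a m).indicator f t - (Ico m b).indicator f t := by
      intro t
      rw [hhaar t]
      by_cases h1 : t ∈ Ico a m <;> by_cases h2 : t ∈ Ico m b <;>
        simp [indicator_of_mem, indicator_of_notMem, h1, h2] <;> ring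
    have eae1 : (Ico a m).indicator f =ᵐ[volume] (Ioc a m).indicator f :=
      indicator_ae_eq_of_ae_eq_set Ico_ae_eq_Ioc
    have eae2 : (Ico m b).indicator f =ᵐ[volume] (Ioc m b).indicator f :=
      indicator_ae_eq_of_ae_eq_set Ico_ae_eq_Ioc
    calc ∫ t in (0:ℝ)..1, f t * haar k j t
        = ∫ t in (0:ℝ)..1, ((Ico a m).indicator f t - (Ico m b).indicator f t) := by
          simp only [e0]
      _ = ∫ t in (0:ℝ)..1, ((Ioc a m).indicator f t - (Ioc m b).indicator f t) := by
          apply intervalIntegral.integral_congr_ae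
          filter_upwards [eae1, eae2] with t h1 h2 _
          rw [h1, h2]
      _ = (∫ t in Ioc (0:ℝ) 1, ((Ioc a m).indicator f t - (Ioc m b).indicator f t)) := by
          rw [intervalIntegral.integral_of_le (by norm_num : (0:ℝ) ≤ 1)]
      _ = (∫ t in Ioc (0:ℝ) 1, (Ioc a m).indicator f t) -
            ∫ t in Ioc (0:ℝ) 1, (Ioc m b).indicator f t := by
          apply integral_sub
          · exact ((integrable_indicator_iff measurableSet_Ioc).mpr hfint1.1).restrict
          · exact ((integrable_indicator_iff measurableSet_Ioc).mpr hfint2.1).restrict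
      _ = (∫ t in a..m, f t) - ∫ t in m..b, f t := by
          rw [setIntegral_indicator measurableSet_Ioc, setIntegral_indicator measurableSet_Ioc]
          have e1 : Ioc (0:ℝ) 1 ∩ Ioc a m = Ioc a m := by
            rw [inter_eq_right]
            exact Ioc_subset_Ioc (by linarith) (by linarith)
          have e2 : Ioc (0:ℝ) 1 ∩ Ioc m b = Ioc m b := by
            rw [inter_eq_right]
            exact Ioc_subset_Ioc (by linarith) hb1
          rw [e1, e2, intervalIntegral.integral_of_le ham'.le,
            intervalIntegral.integral_of_le hmb'.le]
  -- replace f by f 0 + F on the subintervals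
  have hFint1 : IntervalIntegrable F volume a m := by
    apply ContinuousOn.intervalIntegrable
    apply hFcont.mono
    rw [huIcc01, uIcc_of_le ham'.le]
    exact hsub1
  have hFsh : ContinuousOn (fun t => F (t + h)) (Set.uIcc a m) := by
    apply hFcont.comp (Continuous.continuousOn (continuous_add_right h))
    intro t ht
    rw [uIcc_of_le ham'.le] at ht
    rw [huIcc01]
    show t + h ∈ Icc (0:ℝ) 1
    constructor
    · have hh0 : (0:ℝ) ≤ h := by rw [hh]; positivity
      linarith [ht.1]
    · have : t + h ≤ m + h := by linarith [ht.2]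
      rw [hmb] at this
      linarith
  have hFintsh : IntervalIntegrable (fun t => F (t + h)) volume a m :=
    hFsh.intervalIntegrable
  have step2 : (∫ t in a..m, f t) - ∫ t in m..b, f t =
      ∫ t in a..m, (F t - F (t + h)) := by
    have e1 : ∫ t in a..m, f t = ∫ t in a..m, (f 0 + F t) := by
      apply intervalIntegral.integral_congr
      intro t ht
      rw [uIcc_of_le ham'.le] at ht
      exact hweak t (hsub1 ht)
    have e2 : ∫ t in m..b, f t = ∫ t in m..b, (f 0 + F t) := by
      apply intervalIntegral.integral_congr
      intro t ht
      rw [uIcc_of_le hmb'.le] at ht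
      exact hweak t (hsub2 ht)
    have e3 : ∫ t in m..b, (f 0 + F t) = ∫ t in a..m, (f 0 + F (t + h)) := by
      rw [intervalIntegral.integral_comp_add_right (fun t => f 0 + F t) h, ham, hmb]
    rw [e1, e2, e3]
    have hFint2 : IntervalIntegrable (fun t => f 0 + F t) volume a m :=
      (intervalIntegrable_const).add hFint1
    have hFint3 : IntervalIntegrable (fun t => f 0 + F (t + h)) volume a m :=
      (intervalIntegrable_const).add hFintsh
    rw [← intervalIntegral.integral_sub hFint2 hFint3]
    congr 1
    ext t
    ring
  -- the bound
  rw [step1, step2]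
  set C : ℝ := ∫ t in a..b, |f' t| with hC_def
  have hf'ab : IntervalIntegrable f' volume a b := by
    apply hf'int.mono_set
    rw [uIcc_of_le (by linarith : a ≤ b), huIcc01]
    exact Icc_subset_Icc ha0 hb1
  have hbound : ∀ x ∈ Set.uIoc a m, ‖F x - F (x + h)‖ ≤ C := by
    intro x hx
    rw [uIoc_of_le ham'.le] at hx
    have hx1 : a < x := hx.1
    have hx2 : x ≤ m := hx.2
    have hxh : x + h ≤ b := by rw [← hmb]; linarith
    have h0x : (0:ℝ) ≤ x := by linarith
    have hxh1 : x + h ≤ 1 := by linarith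
    have hh0 : (0:ℝ) ≤ h := by rw [hh]; positivity
    have hint0x : IntervalIntegrable f' volume 0 x := by
      apply hf'int.mono_set
      rw [uIcc_of_le h0x, huIcc01]
      exact Icc_subset_Icc le_rfl (by linarith)
    have hintxh : IntervalIntegrable f' volume x (x + h) := by
      apply hf'int.mono_set
      rw [uIcc_of_le (by linarith : x ≤ x + h), huIcc01]
      exact Icc_subset_Icc h0x hxh1
    have key : F (x + h) - F x = ∫ s in x..(x + h), f' s := by
      rw [hF_def]
      simp only
      rw [← intervalIntegral.integral_add_adjacent_intervals hint0x hintxh]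
      ring
    have : F x - F (x + h) = -(∫ s in x..(x + h), f' s) := by rw [← key]; ring
    rw [this, norm_neg, Real.norm_eq_abs]
    calc |∫ s in x..(x + h), f' s| ≤ ∫ s in x..(x + h), |f' s| :=
          intervalIntegral.abs_integral_le_integral_abs (by linarith)
      _ ≤ C := by
          rw [hC_def]
          apply intervalIntegral.integral_mono_interval (by linarith : a ≤ x)
            (by linarith : x ≤ x + h) hxh
          · filter_upwards with t
            exact abs_nonneg _
          · exact hf'ab.abs
  have := intervalIntegral.norm_integral_le_of_norm_le_const hbound
  rw [Real.norm_eq_abs] at this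
  have hma : |m - a| = h := by
    rw [abs_of_nonneg (by linarith : (0:ℝ) ≤ m - a), ← ham]; ring
  rw [hma] at this
  calc |∫ t in a..m, (F t - F (t + h))| ≤ C * h := this
    _ = h * C := by ring
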